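/- Let L > 0, α > 0 and ξ > 0 be real numbers. Then ∫_ξ^∞ h^{L−1} e^{−h} · ( ∫_0^ξ (1 − x/h)^{−1/3} x^{2/α − 1} dx ) dh ≤ B(2/3, 2/α) · ξ^{2/α} · Γ(L, ξ), where B(a, b) = ∫_0^1 t^{a−1} (1 − t)^{b−1} dt is the Beta function and Γ(s, x) = ∫_x^∞ t^{s−1} e^{−t} dt is the upper incomplete Gamma function. -/

import Mathlib

open Real MeasureTheory

/-- The real Beta function `B(a, b) = ∫_0^1 t^{a−1}(1−t)^{b−1} dt`. -/
noncomputable def betaFun (a b : ℝ) : ℝ :=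
  ∫ t in (0:ℝ)..1, t ^ (a - 1) * (1 - t) ^ (b - 1)

/-- The upper incomplete Gamma function `Γ(s, x) = ∫_x^∞ t^{s−1} e^{−t} dt`. -/
noncomputable def upperIncompleteGamma (s x : ℝ) : ℝ :=
  ∫ t in Set.Ioi x, t ^ (s - 1) * Real.exp (-t)

/-- Real Beta integrand is integrable on `(0, 1]`. -/
lemma beta_integrableOn {p q : ℝ} (hp : 0 < p) (hq : 0 < q) :
    IntegrableOn (fun t : ℝ => t ^ (p - 1) * (1 - t) ^ (q - 1)) (Set.Ioc 0 1) := by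
  have hc := Complex.betaIntegral_convergent (u := (p : ℂ)) (v := (q : ℂ))
    (by simpa using hp) (by simpa using hq)
  rw [intervalIntegrable_iff_integrableOn_Ioc_of_le zero_le_one] at hc
  have hc2 : IntegrableOn (fun x : ℝ => ((x ^ (p - 1) * (1 - x) ^ (q - 1) : ℝ) : ℂ))
      (Set.Ioc 0 1) := by
    refine hc.congr_fun (fun x hx => ?_) measurableSet_Ioc
    rw [Complex.ofReal_mul, Complex.ofReal_cpow hx.1.le, Complex.ofReal_cpow (by linarith [hx.2])]
    push_cast
    ring
  have : IntegrableOn (fun x : ℝ => RCLike.re (((x ^ (p - 1) * (1 - x) ^ (q - 1) : ℝ) : ℂ)))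
      (Set.Ioc 0 1) := hc2.re
  simpa using this

theorem integral_term_c2_bound (L α ξ : ℝ) (hL : 0 < L) (hα : 0 < α) (hξ : 0 < ξ) :
    (∫ h in Set.Ioi ξ, h ^ (L - 1) * Real.exp (-h) *
        ∫ x in (0:ℝ)..ξ, (1 - x / h) ^ (-(1 / 3 : ℝ)) * x ^ (2 / α - 1)) ≤
      betaFun (2 / 3) (2 / α) * ξ ^ (2 / α) * upperIncompleteGamma L ξ := by
  have hq : 0 < 2 / α := by positivity
  -- the beta-type set integral
  set I : ℝ := ∫ t in Set.Ioc (0:ℝ) 1, t ^ (2 / α - 1) * (1 - t) ^ ((2:ℝ) / 3 - 1) with hI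
  have hIint : IntegrableOn (fun t : ℝ => t ^ (2 / α - 1) * (1 - t) ^ ((2:ℝ) / 3 - 1))
      (Set.Ioc 0 1) := beta_integrableOn hq (by norm_num)
  -- betaFun (2/3) (2/α) = I by reflection t ↦ 1 - t
  have hbeta : betaFun (2 / 3) (2 / α) = I := by
    have hrefl := intervalIntegral.integral_comp_sub_left (a := (0:ℝ)) (b := 1)
      (fun t : ℝ => t ^ ((2:ℝ) / 3 - 1) * (1 - t) ^ (2 / α - 1)) 1
    simp only [sub_zero, sub_self, sub_sub_cancel] at hrefl
    rw [betaFun, ← hrefl, intervalIntegral.integral_of_le zero_le_one, hI]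
    exact setIntegral_congr_fun measurableSet_Ioc (fun x _ => mul_comm _ _)
  -- inner integral bound for h > ξ
  have hinner : ∀ h : ℝ, h ∈ Set.Ioi ξ →
      (∫ x in (0:ℝ)..ξ, (1 - x / h) ^ (-(1 / 3 : ℝ)) * x ^ (2 / α - 1))
        ≤ ξ ^ (2 / α) * I := by
    intro h hh
    rw [Set.mem_Ioi] at hh
    have hh0 : 0 < h := hξ.trans hh
    -- substitution x = ξ t
    have hsub := intervalIntegral.integral_comp_mul_left
      (fun x : ℝ => (1 - x / h) ^ (-(1 / 3 : ℝ)) * x ^ (2 / α - 1)) (ne_of_gt hξ)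
      (a := (0:ℝ)) (b := 1)
    simp only [mul_zero, mul_one] at hsub
    have key : (∫ t in (0:ℝ)..1, (1 - ξ * t / h) ^ (-(1 / 3 : ℝ)) * (ξ * t) ^ (2 / α - 1))
        ≤ ξ ^ (2 / α - 1) * I := by
      rw [intervalIntegral.integral_of_le zero_le_one]
      have hgi : Integrable (fun t : ℝ => ξ ^ (2 / α - 1) *
          (t ^ (2 / α - 1) * (1 - t) ^ ((2:ℝ) / 3 - 1)))
          (volume.restrict (Set.Ioc (0:ℝ) 1)) := hIint.const_mul _
      have hmono : (∫ t in Set.Ioc (0:ℝ) 1, (1 - ξ * t / h) ^ (-(1 / 3 : ℝ)) * (ξ * t) ^ (2 / α - 1))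
          ≤ ∫ t in Set.Ioc (0:ℝ) 1, ξ ^ (2 / α - 1) *
            (t ^ (2 / α - 1) * (1 - t) ^ ((2:ℝ) / 3 - 1)) := by
        rw [← MeasureTheory.restrict_Ioo_eq_restrict_Ioc]
        refine integral_mono_of_nonneg ?_ (hgi.mono_measure
          (Measure.restrict_mono Set.Ioo_subset_Ioc_self le_rfl)) ?_
        · filter_upwards [ae_restrict_mem measurableSet_Ioo] with t ht
          have h1 : ξ * t / h ≤ t := by
            rw [div_le_iff₀ hh0]
            nlinarith [ht.1.le, hh.le]
          have h2 : (0:ℝ) ≤ 1 - ξ * t / h := by linarith [ht.2.le]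
          exact mul_nonneg (Real.rpow_nonneg h2 _) (Real.rpow_nonneg (mul_nonneg hξ.le ht.1.le) _)
        · filter_upwards [ae_restrict_mem measurableSet_Ioo] with t ht
          have ht0 : 0 < t := ht.1
          have ht1 : t < 1 := ht.2
          have h1 : ξ * t / h ≤ t := by
            rw [div_le_iff₀ hh0]
            nlinarith [ht0.le, hh.le]
          have h2 : (0:ℝ) < 1 - t := by linarith
          have h3 : (1 - t) ≤ (1 - ξ * t / h) := by linarith
          have hle : (1 - ξ * t / h) ^ (-(1 / 3 : ℝ)) ≤ (1 - t) ^ (-(1 / 3 : ℝ)) :=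
            Real.rpow_le_rpow_of_nonpos h2 h3 (by norm_num)
          have hprod : (ξ * t) ^ (2 / α - 1) = ξ ^ (2 / α - 1) * t ^ (2 / α - 1) :=
            Real.mul_rpow hξ.le ht0.le
          calc (1 - ξ * t / h) ^ (-(1 / 3 : ℝ)) * (ξ * t) ^ (2 / α - 1)
              ≤ (1 - t) ^ (-(1 / 3 : ℝ)) * (ξ * t) ^ (2 / α - 1) := by
                exact mul_le_mul_of_nonneg_right hle (Real.rpow_nonneg (by positivity) _)
            _ = ξ ^ (2 / α - 1) * (t ^ (2 / α - 1) * (1 - t) ^ ((2:ℝ) / 3 - 1)) := by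
                rw [hprod]
                have : ((2:ℝ) / 3 - 1) = -(1/3 : ℝ) := by norm_num
                rw [this]; ring
      calc (∫ t in Set.Ioc (0:ℝ) 1, (1 - ξ * t / h) ^ (-(1 / 3 : ℝ)) * (ξ * t) ^ (2 / α - 1))
          ≤ ∫ t in Set.Ioc (0:ℝ) 1, ξ ^ (2 / α - 1) *
            (t ^ (2 / α - 1) * (1 - t) ^ ((2:ℝ) / 3 - 1)) := hmono
        _ = ξ ^ (2 / α - 1) * I := by rw [hI, integral_const_mul]
    -- combine: inner = ξ • ∫₀¹ f(ξ t)
    have hval : (∫ x in (0:ℝ)..ξ, (1 - x / h) ^ (-(1 / 3 : ℝ)) * x ^ (2 / α - 1))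
        = ξ * ∫ t in (0:ℝ)..1, (1 - ξ * t / h) ^ (-(1 / 3 : ℝ)) * (ξ * t) ^ (2 / α - 1) := by
      rw [hsub, smul_eq_mul, ← mul_assoc, mul_inv_cancel₀ (ne_of_gt hξ), one_mul]
    rw [hval]
    have := mul_le_mul_of_nonneg_left key hξ.le
    calc ξ * ∫ t in (0:ℝ)..1, (1 - ξ * t / h) ^ (-(1 / 3 : ℝ)) * (ξ * t) ^ (2 / α - 1)
        ≤ ξ * (ξ ^ (2 / α - 1) * I) := this
      _ = ξ ^ (2 / α) * I := by
          rw [Real.rpow_sub_one (ne_of_gt hξ)]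
          field_simp
  -- nonnegativity of the inner integral
  have hinner_nonneg : ∀ h : ℝ, h ∈ Set.Ioi ξ →
      0 ≤ ∫ x in (0:ℝ)..ξ, (1 - x / h) ^ (-(1 / 3 : ℝ)) * x ^ (2 / α - 1) := by
    intro h hh
    rw [Set.mem_Ioi] at hh
    have hh0 : 0 < h := hξ.trans hh
    refine intervalIntegral.integral_nonneg hξ.le (fun x hx => ?_)
    have h1 : x / h ≤ 1 := by
      rw [div_le_one hh0]; linarith [hx.2, hh]
    have h2 : (0:ℝ) ≤ 1 - x / h := by linarith
    exact mul_nonneg (Real.rpow_nonneg h2 _) (Real.rpow_nonneg hx.1 _)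
  -- outer integral
  have hgamma : IntegrableOn (fun h : ℝ => h ^ (L - 1) * Real.exp (-h)) (Set.Ioi ξ) := by
    have := (Real.GammaIntegral_convergent hL).mono_set (Set.Ioi_subset_Ioi hξ.le)
    exact this.congr_fun (fun x _ => mul_comm _ _) measurableSet_Ioi
  have hmain : (∫ h in Set.Ioi ξ, h ^ (L - 1) * Real.exp (-h) *
        ∫ x in (0:ℝ)..ξ, (1 - x / h) ^ (-(1 / 3 : ℝ)) * x ^ (2 / α - 1))
      ≤ ∫ h in Set.Ioi ξ, h ^ (L - 1) * Real.exp (-h) * (ξ ^ (2 / α) * I) := by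
    refine integral_mono_of_nonneg ?_ (hgamma.mul_const _) ?_
    · filter_upwards [ae_restrict_mem measurableSet_Ioi] with h hh
      have hh0 : 0 < h := hξ.trans hh
      have := hinner_nonneg h hh
      positivity
    · filter_upwards [ae_restrict_mem measurableSet_Ioi] with h hh
      have hh0 : 0 < h := hξ.trans hh
      exact mul_le_mul_of_nonneg_left (hinner h hh) (by positivity)
  calc (∫ h in Set.Ioi ξ, h ^ (L - 1) * Real.exp (-h) *
        ∫ x in (0:ℝ)..ξ, (1 - x / h) ^ (-(1 / 3 : ℝ)) * x ^ (2 / α - 1))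
      ≤ ∫ h in Set.Ioi ξ, h ^ (L - 1) * Real.exp (-h) * (ξ ^ (2 / α) * I) := hmain
    _ = (∫ h in Set.Ioi ξ, h ^ (L - 1) * Real.exp (-h)) * (ξ ^ (2 / α) * I) :=
        integral_mul_const _ _
    _ = betaFun (2 / 3) (2 / α) * ξ ^ (2 / α) * upperIncompleteGamma L ξ := by
        rw [hbeta, upperIncompleteGamma]; ring
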